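/- Let T be an ergodic measure-preserving transformation of a probability space (X, F, μ), and let (f_n)_{n≥1} be integrable functions X → ℝ satisfying the subadditivity relation f_{n+m}(x) ≤ f_n(T^m x) + f_m(x) for μ-a.e. x and all n, m ≥ 1. If lim_{n→∞} f_n(x) = −∞ for μ-a.e. x, then lim_{n→∞} (1/n) ∫ f_n dμ < 0. -/

import Mathlib

open MeasureTheory Filter Set
open scoped Topology ENNReal

set_option linter.unusedSectionVars false
set_option linter.unusedTactic false
set_option maxHeartbeats 1000000

namespace ClimenhagaMorris

variable {X : Type*} [MeasurableSpace X] {μ : Measure X} {T : X → X} {h w : X → ℝ}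



/-- Birkhoff sums. -/
noncomputable def bS (T : X → X) (h : X → ℝ) (k : ℕ) (x : X) : ℝ :=
  ∑ j ∈ Finset.range k, h (T^[j] x)

lemma bS_succ (T : X → X) (h : X → ℝ) (k : ℕ) (x : X) :
    bS T h (k + 1) x = h x + bS T h k (T x) := by
  unfold bS
  rw [Finset.sum_range_succ']
  simp only [Function.iterate_succ_apply, Function.iterate_zero_apply]
  ring

lemma bS_measurable (hT : Measurable T) (hh : Measurable h) (k : ℕ) :
    Measurable (bS T h k) := by
  apply Finset.measurable_sum
  exact fun j _ => hh.comp (hT.iterate j)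

/-- The Garsia maximal function. -/
noncomputable def mx (T : X → X) (h : X → ℝ) : ℕ → X → ℝ
  | 0 => h
  | (N + 1) => fun x => h x + max 0 (mx T h N (T x))

lemma mx_measurable (hT : Measurable T) (hh : Measurable h) (N : ℕ) :
    Measurable (mx T h N) := by
  induction N with
  | zero => exact hh
  | succ N ih => exact hh.add ((measurable_const.max (ih.comp hT)))

lemma integrable_comp_of_measurePreserving {u : X → ℝ} (hT : MeasurePreserving T μ μ)
    (hum : AEStronglyMeasurable u μ) (hu : Integrable u μ) :
    Integrable (fun x => u (T x)) μ := by
  have : Integrable u (Measure.map T μ) := by rwa [hT.map_eq]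
  have hmeas : AEStronglyMeasurable u (Measure.map T μ) := by rwa [hT.map_eq]
  exact (integrable_map_measure hmeas hT.measurable.aemeasurable).mp this

lemma integral_comp_of_measurePreserving {u : X → ℝ} (hT : MeasurePreserving T μ μ)
    (hum : AEStronglyMeasurable u μ) :
    ∫ x, u (T x) ∂μ = ∫ x, u x ∂μ := by
  have hmeas : AEStronglyMeasurable u (Measure.map T μ) := by rwa [hT.map_eq]
  rw [← integral_map hT.measurable.aemeasurable hmeas, hT.map_eq]

lemma mx_integrable (hT : MeasurePreserving T μ μ) (hhm : Measurable h)
    (hh : Integrable h μ) (N : ℕ) : Integrable (mx T h N) μ := by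
  induction N with
  | zero => exact hh
  | succ N ih =>
      have h1 : Integrable (fun x => mx T h N (T x)) μ :=
        integrable_comp_of_measurePreserving hT
          (mx_measurable hT.measurable hhm N).aestronglyMeasurable ih
      have h2 : Integrable (fun x => max 0 (mx T h N (T x))) μ := by
        have := h1.pos_part
        simpa [max_comm] using this
      exact hh.add h2

lemma mx_mono (N : ℕ) (x : X) : mx T h N x ≤ mx T h (N + 1) x := by
  induction N generalizing x with
  | zero =>
      show h x ≤ h x + max 0 (mx T h 0 (T x))
      have : (0:ℝ) ≤ max 0 (mx T h 0 (T x)) := le_max_left _ _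
      linarith
  | succ N ih =>
      show h x + max 0 (mx T h N (T x)) ≤ h x + max 0 (mx T h (N+1) (T x))
      have := ih (T x)
      have : max 0 (mx T h N (T x)) ≤ max 0 (mx T h (N+1) (T x)) :=
        max_le_max le_rfl this
      linarith

lemma mx_mono' {N M : ℕ} (hNM : N ≤ M) (x : X) : mx T h N x ≤ mx T h M x := by
  induction M with
  | zero => simp only [Nat.le_zero] at hNM; subst hNM; exact le_rfl
  | succ M ih =>
      rcases Nat.lt_or_ge N (M+1) with hl | hg
      · exact le_trans (ih (Nat.lt_succ_iff.mp hl)) (mx_mono M x)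
      · have : N = M + 1 := le_antisymm hNM hg
        subst this; exact le_rfl

lemma bS_le_mx (k : ℕ) (x : X) : bS T h (k + 1) x ≤ mx T h k x := by
  induction k generalizing x with
  | zero =>
      show bS T h 1 x ≤ h x
      rw [bS_succ]
      simp [bS]
  | succ k ih =>
      rw [bS_succ]
      have h1 : bS T h (k+1) (T x) ≤ mx T h k (T x) := ih (T x)
      have h2 : mx T h k (T x) ≤ max 0 (mx T h k (T x)) := le_max_right _ _
      show h x + bS T h (k+1) (T x) ≤ h x + max 0 (mx T h k (T x))
      linarith

/-- Key pointwise inequality for Garsia's proof. -/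
lemma mx_le_key (N : ℕ) (x : X) : mx T h N x ≤ h x + max 0 (mx T h N (T x)) :=
  le_trans (mx_mono N x) le_rfl





/-- **Hopf maximal ergodic theorem** (Garsia's proof). -/
lemma hopf (hT : MeasurePreserving T μ μ) (hhm : Measurable h) (hh : Integrable h μ) (N : ℕ) :
    0 ≤ ∫ x in {x | 0 < mx T h N x}, h x ∂μ := by
  set E : Set X := {x | 0 < mx T h N x} with hE
  have hEmeas : MeasurableSet E := measurableSet_lt measurable_const (mx_measurable hT.measurable hhm N)
  set P : X → ℝ := fun x => max 0 (mx T h N x) with hP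
  have hPmeas : Measurable P := measurable_const.max (mx_measurable hT.measurable hhm N)
  have hPint : Integrable P μ := by
    have := (mx_integrable hT hhm hh N).pos_part
    simpa [hP, max_comm] using this
  have hPT_int : Integrable (fun x => P (T x)) μ :=
    integrable_comp_of_measurePreserving hT hPmeas.aestronglyMeasurable hPint
  -- pointwise : on E, mx = P and P ≤ h + P ∘ T
  have key : ∀ x ∈ E, P x - P (T x) ≤ h x := by
    intro x hx
    have h1 : mx T h N x ≤ h x + P (T x) := mx_le_key N x
    have h2 : P x = mx T h N x := max_eq_right (le_of_lt hx)
    linarith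
  have hint_sub : Integrable (fun x => P x - P (T x)) μ := hPint.sub hPT_int
  have step1 : ∫ x in E, (P x - P (T x)) ∂μ ≤ ∫ x in E, h x ∂μ := by
    apply setIntegral_mono_on (hint_sub.integrableOn) (hh.integrableOn) hEmeas
    exact key
  have step2 : 0 ≤ ∫ x in E, (P x - P (T x)) ∂μ := by
    rw [integral_sub (hPint.integrableOn) (hPT_int.integrableOn)]
    -- ∫_E P = ∫_X P  since P = 0 off E
    have hPE : ∫ x in E, P x ∂μ = ∫ x, P x ∂μ := by
      rw [← integral_indicator hEmeas]
      congr 1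
      funext x
      by_cases hx : x ∈ E
      · simp [hx]
      · have : mx T h N x ≤ 0 := le_of_not_gt hx
        simp [indicator, hx, hP, max_eq_left this]
    have hPTE : ∫ x in E, P (T x) ∂μ ≤ ∫ x, P (T x) ∂μ := by
      apply setIntegral_le_integral hPT_int
      filter_upwards with x
      exact le_max_left _ _
    have hPT : ∫ x, P (T x) ∂μ = ∫ x, P x ∂μ :=
      integral_comp_of_measurePreserving hT hPmeas.aestronglyMeasurable
    rw [hPE]
    linarith
  linarith

/-- If `∫ h < 0`, then with positive probability all Birkhoff sums of `h` are `≤ 0`. -/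
lemma exists_pos_sums [IsProbabilityMeasure μ] (hT : MeasurePreserving T μ μ)
    (hhm : Measurable h) (hh : Integrable h μ) (hneg : ∫ x, h x ∂μ < 0) :
    0 < μ {x | ∀ k, 1 ≤ k → bS T h k x ≤ 0} := by
  set E : ℕ → Set X := fun N => {x | 0 < mx T h N x} with hE
  have hEmeas : ∀ N, MeasurableSet (E N) := fun N =>
    measurableSet_lt measurable_const (mx_measurable hT.measurable hhm N)
  have hEmono : Monotone E := by
    intro N M hNM x hx
    exact lt_of_lt_of_le hx (mx_mono' hNM x)
  -- complement of the union is inside our target set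
  have hsubset : (⋃ N, E N)ᶜ ⊆ {x | ∀ k, 1 ≤ k → bS T h k x ≤ 0} := by
    intro x hx k hk
    simp only [mem_compl_iff, mem_iUnion, not_exists] at hx
    obtain ⟨k', rfl⟩ := Nat.exists_eq_add_of_le hk
    have h1 : bS T h (1 + k') x = bS T h (k' + 1) x := by rw [Nat.add_comm]
    rw [h1]
    have := bS_le_mx (T := T) (h := h) k' x
    have h2 : ¬ (0 < mx T h k' x) := hx k'
    linarith [le_of_not_gt h2]
  -- if the union had measure 1 we'd contradict ∫ h < 0
  by_contra hcon
  push_neg at hcon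
  have hzero : μ {x | ∀ k, 1 ≤ k → bS T h k x ≤ 0} = 0 := le_antisymm hcon zero_le
  have hcompl : μ (⋃ N, E N)ᶜ = 0 := measure_mono_null hsubset hzero
  have hunion : (⋃ N, E N) =ᵐ[μ] (univ : Set X) := by
    rw [ae_eq_univ]; exact hcompl
  have hten : Tendsto (fun N => ∫ x in E N, h x ∂μ) atTop
      (𝓝 (∫ x in ⋃ N, E N, h x ∂μ)) :=
    tendsto_setIntegral_of_monotone hEmeas hEmono hh.integrableOn
  have hlim : 0 ≤ ∫ x in ⋃ N, E N, h x ∂μ :=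
    ge_of_tendsto' hten (fun N => hopf hT hhm hh N)
  have : ∫ x in ⋃ N, E N, h x ∂μ = ∫ x, h x ∂μ := by
    rw [setIntegral_congr_set hunion, setIntegral_univ]
  linarith





/-- An ergodic invariant set of positive measure is a.e. everything. -/
lemma ae_of_invariant (hT : Ergodic T μ) {s : Set X} (hs : MeasurableSet s)
    (hinv : T ⁻¹' s = s) (hpos : μ s ≠ 0) : ∀ᵐ x ∂μ, x ∈ s := by
  rcases hT.toPreErgodic.ae_empty_or_univ hs hinv with H | H
  · exfalso
    apply hpos
    have : μ s = μ (∅ : Set X) := measure_congr H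
    simpa using this
  · have : μ sᶜ = 0 := by
      have := measure_congr H
      rw [ae_eq_univ] at H
      exact H
    exact this

lemma bS_sub_const (T : X → X) (w : X → ℝ) (c : ℝ) (k : ℕ) (x : X) :
    bS T (fun y => w y - c) k x = bS T w k x - k * c := by
  unfold bS
  rw [Finset.sum_sub_distrib]
  simp [Finset.sum_const, mul_comm]


lemma arith1 {wx c₀ a b s n' : ℝ} (hbs : s ≤ (c₀ + b) * n') (hγK : |wx| + |c₀| + b + 1 ≤ (a - b) * n')
    (ha : 0 ≤ a) (hb0 : 0 ≤ b) : wx + s ≤ (c₀ + a) * (n' + 1) := by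
  have h1 : wx ≤ |wx| := le_abs_self wx
  have h2 : -|c₀| ≤ c₀ := neg_abs_le c₀
  have h3 : (c₀ + b) * n' + (a - b) * n' = (c₀ + a) * n' := by ring
  have h4 : (c₀ + a) * (n' + 1) = (c₀ + a) * n' + c₀ + a := by ring
  linarith

lemma arith2 {wx c₀ a b s n : ℝ} (hbs : wx + s ≤ (c₀ + b) * (n + 1))
    (hγK : |wx| + |c₀| + b + 1 ≤ (a - b) * n) :
    s ≤ (c₀ + a) * n := by
  have h1 : -wx ≤ |wx| := neg_le_abs wx
  have h2 : c₀ ≤ |c₀| := le_abs_self c₀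
  have h3 : (c₀ + b) * (n + 1) + (a - b) * n = (c₀ + a) * n + c₀ + b := by ring
  linarith

/-- Cheap one-sided Birkhoff result: a.e., Birkhoff sums of `w` eventually grow
at rate at most `c` for any `c > ∫ w`. -/
lemma cheap_upper [IsProbabilityMeasure μ] (hT : Ergodic T μ)
    (hwm : Measurable w) (hw : Integrable w μ) {c : ℝ} (hc : ∫ x, w x ∂μ < c) :
    ∀ᵐ x ∂μ, ∀ᶠ n in atTop, bS T w n x ≤ c * n := by
  set c₀ : ℝ := (∫ x, w x ∂μ + c) / 2 with hc₀def
  have hc₀l : ∫ x, w x ∂μ < c₀ := by rw [hc₀def]; linarith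
  have hc₀r : c₀ < c := by rw [hc₀def]; linarith
  set D : Set X := {x | ∀ m : ℕ, ∀ᶠ n in atTop, bS T w n x ≤ (c₀ + 1/(m+1)) * n} with hD
  have hDmeas : MeasurableSet D := by
    have : D = ⋂ m : ℕ, ⋃ N : ℕ, ⋂ n : ℕ, ⋂ (_ : N ≤ n),
        {x | bS T w n x ≤ (c₀ + 1/(m+1)) * n} := by
      ext x
      simp [hD, eventually_atTop]
    rw [this]
    refine MeasurableSet.iInter fun m => MeasurableSet.iUnion fun N =>
      MeasurableSet.iInter fun n => MeasurableSet.iInter fun _ => ?_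
    exact measurableSet_le (bS_measurable hT.toMeasurePreserving.measurable hwm n) measurable_const
  have hDinv : T ⁻¹' D = D := by
    have hgam : ∀ m : ℕ, (0:ℝ) < 1/((m:ℝ)+1) - 1/((m:ℝ)+2) := by
      intro m
      have h1 : (0:ℝ) < (m:ℝ) + 1 := by positivity
      have h2 : (0:ℝ) < (m:ℝ) + 2 := by positivity
      rw [div_sub_div _ _ (ne_of_gt h1) (ne_of_gt h2)]
      apply div_pos <;> nlinarith
    ext x
    simp only [mem_preimage, hD, mem_setOf_eq]
    constructor
    · -- T x ∈ D → x ∈ D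
      intro H m
      have Hm := H (m + 1)
      rw [eventually_atTop] at Hm ⊢
      obtain ⟨N, hN⟩ := Hm
      set a : ℝ := 1/((m:ℝ)+1) with ha
      set b : ℝ := 1/((m:ℝ)+2) with hb
      have hγpos : 0 < a - b := hgam m
      obtain ⟨K, hK⟩ := exists_nat_ge ((|w x| + |c₀| + b + 1) / (a - b))
      refine ⟨N + K + 1, fun n hn => ?_⟩
      obtain ⟨n', rfl⟩ : ∃ n', n = n' + 1 := ⟨n - 1, by omega⟩
      have hn' : N ≤ n' := by omega
      have hbs := hN n' hn'
      have hcastb : (1:ℝ)/(((m:ℕ):ℝ) + 1 + 1) = b := by rw [hb]; congr 1; push_cast; ring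
      have hbs' : bS T w n' (T x) ≤ (c₀ + b) * n' := by
        push_cast at hbs
        rw [hcastb] at hbs
        exact hbs
      have hcast : (K : ℝ) ≤ (n' : ℝ) := by exact_mod_cast (by omega : K ≤ n')
      have hγK : |w x| + |c₀| + b + 1 ≤ (a - b) * n' := by
        rw [div_le_iff₀ hγpos] at hK
        calc |w x| + |c₀| + b + 1 ≤ (K:ℝ) * (a - b) := hK
          _ = (a - b) * K := by ring
          _ ≤ (a - b) * n' := mul_le_mul_of_nonneg_left hcast (le_of_lt hγpos)
      have ha0 : (0:ℝ) ≤ a := by rw [ha]; positivity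
      have final : w x + bS T w n' (T x) ≤ (c₀ + a) * ((n':ℝ) + 1) :=
        arith1 hbs' hγK ha0 (by rw [hb]; positivity)
      rw [bS_succ]
      push_cast
      exact final
    · -- x ∈ D → T x ∈ D
      intro H m
      have Hm := H (m + 1)
      rw [eventually_atTop] at Hm ⊢
      obtain ⟨N, hN⟩ := Hm
      set a : ℝ := 1/((m:ℝ)+1) with ha
      set b : ℝ := 1/((m:ℝ)+2) with hb
      have hγpos : 0 < a - b := hgam m
      obtain ⟨K, hK⟩ := exists_nat_ge ((|w x| + |c₀| + b + 1) / (a - b))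
      refine ⟨N + K + 1, fun n hn => ?_⟩
      have hbs := hN (n+1) (by omega)
      rw [bS_succ] at hbs
      have hcastb : (1:ℝ)/(((m:ℕ):ℝ) + 1 + 1) = b := by rw [hb]; congr 1; push_cast; ring
      have hbs' : w x + bS T w n (T x) ≤ (c₀ + b) * ((n:ℝ) + 1) := by
        push_cast at hbs
        rw [hcastb] at hbs
        exact hbs
      have hcast : (K : ℝ) ≤ (n : ℝ) := by exact_mod_cast (by omega : K ≤ n)
      have hγK : |w x| + |c₀| + b + 1 ≤ (a - b) * n := by
        rw [div_le_iff₀ hγpos] at hK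
        calc |w x| + |c₀| + b + 1 ≤ (K:ℝ) * (a - b) := hK
          _ = (a - b) * K := by ring
          _ ≤ (a - b) * n := mul_le_mul_of_nonneg_left hcast (le_of_lt hγpos)
      exact arith2 hbs' hγK
  -- positive measure via exists_pos_sums
  have hpos : μ D ≠ 0 := by
    have hneg : ∫ x, (w x - c₀) ∂μ < 0 := by
      rw [integral_sub hw (integrable_const c₀)]
      simp only [integral_const]
      simp [measure_univ]
      linarith
    have hposF := exists_pos_sums hT.toMeasurePreserving (hwm.sub measurable_const)
      (hw.sub (integrable_const c₀)) hneg
    have hsub : {x | ∀ k, 1 ≤ k → bS T (fun y => w y - c₀) k x ≤ 0} ⊆ D := by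
      intro x hx
      simp only [mem_setOf_eq] at hx
      intro m
      rw [eventually_atTop]
      refine ⟨1, fun n hn => ?_⟩
      have := hx n hn
      rw [bS_sub_const] at this
      have hm1 : (0:ℝ) ≤ 1/(m+1) := by positivity
      have hn0 : (0:ℝ) ≤ n := Nat.cast_nonneg n
      nlinarith
    intro hzero
    have : μ {x | ∀ k, 1 ≤ k → bS T (fun y => w y - c₀) k x ≤ 0} = 0 :=
      measure_mono_null hsub hzero
    change 0 < μ {x | ∀ k, 1 ≤ k → bS T (fun y => w y - c₀) k x ≤ 0} at hposF
    rw [this] at hposF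
    exact lt_irrefl _ hposF
  have hae := ae_of_invariant hT hDmeas hDinv hpos
  filter_upwards [hae] with x hx
  obtain ⟨m, hm⟩ := exists_nat_one_div_lt (show (0:ℝ) < c - c₀ by linarith)
  have := hx m
  filter_upwards [this] with n hn
  have hn0 : (0:ℝ) ≤ n := Nat.cast_nonneg n
  have : (c₀ + 1/(m+1)) ≤ c := by
    push_cast at hm ⊢
    linarith
  nlinarith



/-- The pointwise chain bound. `g m p` is the value of the length-`m` block starting at
position `p` (i.e. `f m (T^[p] x)` for a fixed `x`). Hopping between visits to the
"uniformly dead" set spaced `≥ N₀` apart forces linear decay. -/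
lemma chain_bound (g : ℕ → ℕ → ℝ) (N₀ : ℕ) (hN₀ : 1 ≤ N₀)
    (vis : ℕ → Prop) [DecidablePred vis]
    (hvis : ∀ p, vis p → ∀ m, N₀ ≤ m → g m p ≤ -1)
    (hsub : ∀ p n m, 1 ≤ n → 1 ≤ m → g (n + m) p ≤ g n (p + m) + g m p)
    (hinf : ∀ m, ∃ p, m ≤ p ∧ vis p) :
    ∃ C : ℝ, ∃ n₀ : ℕ, ∀ n, n₀ ≤ n →
      g n 0 ≤ C - (((Finset.range n).filter vis).card : ℝ) / N₀
               + ∑ j ∈ Finset.Ico (n - N₀) n, max (g 1 j) 0 := by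
  classical
  -- the "next visit at or after a" function
  have hex : ∀ a : ℕ, ∃ s : ℕ, vis (a + s) := by
    intro a
    obtain ⟨p, hp, hvp⟩ := hinf a
    exact ⟨p - a, by rwa [Nat.add_sub_cancel' hp]⟩
  set next : ℕ → ℕ := fun a => a + Nat.find (hex a) with hnext
  have hnext_ge : ∀ a, a ≤ next a := fun a => Nat.le_add_right _ _
  have hnext_vis : ∀ a, vis (next a) := fun a => Nat.find_spec (hex a)
  have hnext_min : ∀ a v, a ≤ v → v < next a → ¬ vis v := by
    intro a v hav hv
    have hna : next a = a + Nat.find (hex a) := rfl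
    have : v - a < Nat.find (hex a) := by omega
    have := Nat.find_min (hex a) this
    rwa [Nat.add_sub_cancel' hav] at this
  -- the chain of visit points spaced ≥ N₀
  set p₀ : ℕ := next 0 with hp₀
  set q : ℕ → ℕ := fun i => Nat.rec (next (p₀ + N₀)) (fun _ prev => next (prev + N₀)) i with hq
  have hq0 : q 0 = next (p₀ + N₀) := rfl
  have hqsucc : ∀ i, q (i + 1) = next (q i + N₀) := fun i => rfl
  have hqvis : ∀ i, vis (q i) := by
    intro i
    cases i with
    | zero => exact hnext_vis _
    | succ i => exact hnext_vis _
  have hq0_ge : p₀ + N₀ ≤ q 0 := hnext_ge _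
  have hqsucc_ge : ∀ i, q i + N₀ ≤ q (i + 1) := fun i => hnext_ge _
  have hq_ge : ∀ i, (i + 1) * N₀ ≤ q i := by
    intro i
    induction i with
    | zero => simpa using le_trans (Nat.le_add_left N₀ p₀) hq0_ge
    | succ i ih =>
        have := hqsucc_ge i
        calc (i + 1 + 1) * N₀ = (i+1) * N₀ + N₀ := by ring
          _ ≤ q i + N₀ := by omega
          _ ≤ q (i+1) := this
  -- the subadditive chain to f₁'s
  have hchain1 : ∀ k p, 1 ≤ k → g k p ≤ ∑ j ∈ Finset.range k, g 1 (p + j) := by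
    intro k
    induction k with
    | zero => intro p h; omega
    | succ k ih =>
        intro p _
        rcases Nat.eq_zero_or_pos k with h1 | h1
        · subst h1; simp
        · have hk : 1 ≤ k := h1
          have := hsub p 1 k le_rfl hk
          have h2 := ih p hk
          calc g (k + 1) p = g (1 + k) p := by rw [Nat.add_comm]
            _ ≤ g 1 (p + k) + g k p := this
            _ ≤ g 1 (p + k) + ∑ j ∈ Finset.range k, g 1 (p + j) := by linarith
            _ = ∑ j ∈ Finset.range (k+1), g 1 (p + j) := by
                rw [Finset.sum_range_succ]; ring
  -- value along the chain
  set C₀ : ℝ := ∑ j ∈ Finset.range p₀, max (g 1 j) 0 with hC₀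
  have hC₀_nonneg : 0 ≤ C₀ := Finset.sum_nonneg fun j _ => le_max_right _ _
  have hval : ∀ i, g (q i) 0 ≤ C₀ - (i + 1) := by
    intro i
    induction i with
    | zero =>
        rcases Nat.eq_zero_or_pos p₀ with hp0 | hp0
        · -- p₀ = 0 : x itself is a visit point
          have hv : vis 0 := by rw [← hp0]; exact hnext_vis 0
          have : g (q 0) 0 ≤ -1 := hvis 0 hv (q 0) (by have := hq_ge 0; omega)
          have hC : C₀ = 0 := by rw [hC₀, hp0]; simp
          rw [hC]
          push_cast
          linarith
        · -- split at p₀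
          have hd : N₀ ≤ q 0 - p₀ := by have := hq0_ge; omega
          have hqeq : q 0 = (q 0 - p₀) + p₀ := by omega
          have h1 : g ((q 0 - p₀) + p₀) 0 ≤ g (q 0 - p₀) (0 + p₀) + g p₀ 0 :=
            hsub 0 (q 0 - p₀) p₀ (by omega) hp0
          have h2 : g (q 0 - p₀) (0 + p₀) ≤ -1 := by
            rw [Nat.zero_add]
            exact hvis p₀ (hnext_vis 0) _ hd
          have h3 : g p₀ 0 ≤ ∑ j ∈ Finset.range p₀, g 1 (0 + j) := hchain1 p₀ 0 hp0
          have h4 : ∑ j ∈ Finset.range p₀, g 1 (0 + j) ≤ C₀ := by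
            rw [hC₀]
            apply Finset.sum_le_sum
            intro j _
            rw [Nat.zero_add]
            exact le_max_left _ _
          rw [hqeq]
          push_cast
          linarith
    | succ i ih =>
        have hd : N₀ ≤ q (i+1) - q i := by have := hqsucc_ge i; omega
        have hqeq : q (i+1) = (q (i+1) - q i) + q i := by
          have := hqsucc_ge i; omega
        have hqi1 : 1 ≤ q i := by have := hq_ge i; nlinarith [hq_ge i]
        have h1 : g ((q (i+1) - q i) + q i) 0 ≤ g (q (i+1) - q i) (0 + q i) + g (q i) 0 :=
          hsub 0 (q (i+1) - q i) (q i) (by omega) hqi1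
        have h2 : g (q (i+1) - q i) (0 + q i) ≤ -1 := by
          rw [Nat.zero_add]
          exact hvis (q i) (hqvis i) _ hd
        rw [hqeq]
        push_cast
        push_cast at ih
        linarith
  -- visit counting
  set count : ℕ → ℕ := fun n => ((Finset.range n).filter vis).card with hcount
  have hcount_mono : ∀ {a b}, a ≤ b → count a ≤ count b := by
    intro a b hab
    apply Finset.card_le_card
    apply Finset.filter_subset_filter
    intro x hx
    simp only [Finset.mem_range] at hx ⊢
    omega
  have hcount_add : ∀ a b, a ≤ b → count b ≤ count a + (b - a) := by
    intro a b hab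
    have : (Finset.range b).filter vis ⊆ (Finset.range a).filter vis ∪ Finset.Ico a b := by
      intro x hx
      simp only [Finset.mem_filter, Finset.mem_range] at hx
      simp only [Finset.mem_union, Finset.mem_filter, Finset.mem_range, Finset.mem_Ico]
      rcases Nat.lt_or_ge x a with h | h
      · exact Or.inl ⟨h, hx.2⟩
      · exact Or.inr ⟨h, hx.1⟩
    calc count b ≤ ((Finset.range a).filter vis ∪ Finset.Ico a b).card :=
          Finset.card_le_card this
      _ ≤ count a + (Finset.Ico a b).card := Finset.card_union_le _ _
      _ = count a + (b - a) := by rw [Nat.card_Ico]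
  have hcount_gap : ∀ a b, (∀ v, a ≤ v → v < b → ¬ vis v) → a ≤ b → count b ≤ count a := by
    intro a b hgap hab
    apply Finset.card_le_card
    intro x hx
    simp only [Finset.mem_filter, Finset.mem_range] at hx ⊢
    rcases Nat.lt_or_ge x a with h | h
    · exact ⟨h, hx.2⟩
    · exact absurd hx.2 (hgap x h hx.1)
  -- count at the chain points
  have hcount_q : ∀ i, count (q i + N₀) ≤ (i + 2) * N₀ := by
    intro i
    induction i with
    | zero =>
        have c1 : count p₀ = 0 := by
          rw [hcount]
          simp only [Finset.card_eq_zero]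
          rw [Finset.filter_eq_empty_iff]
          intro x hx
          simp only [Finset.mem_range] at hx
          exact hnext_min 0 x (Nat.zero_le x) (by omega)
        have c2 : count (p₀ + N₀) ≤ count p₀ + N₀ := by
          have := hcount_add p₀ (p₀ + N₀) (by omega)
          simpa using this
        have c3 : count (q 0) ≤ count (p₀ + N₀) :=
          hcount_gap (p₀ + N₀) (q 0) (fun v h1 h2 => hnext_min _ v h1 h2) hq0_ge
        have c4 : count (q 0 + N₀) ≤ count (q 0) + N₀ := by
          have := hcount_add (q 0) (q 0 + N₀) (by omega)
          simpa using this
        omega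
    | succ i ih =>
        have c3 : count (q (i+1)) ≤ count (q i + N₀) :=
          hcount_gap (q i + N₀) (q (i+1)) (fun v h1 h2 => hnext_min _ v h1 h2) (hqsucc_ge i)
        have c4 : count (q (i+1) + N₀) ≤ count (q (i+1)) + N₀ := by
          have := hcount_add (q (i+1)) (q (i+1) + N₀) (by omega)
          simpa using this
        have : (i + 1 + 2) * N₀ = (i + 2) * N₀ + N₀ := by ring
        omega
  -- main bound
  refine ⟨C₀ + 1, q 0 + 1, fun n hn => ?_⟩
  -- find the last chain point ≤ n
  set P : ℕ → Prop := fun i => q i ≤ n with hP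
  have hP0 : P 0 := by omega
  set i₀ : ℕ := Nat.findGreatest P n with hi₀
  have hi₀P : P i₀ := Nat.findGreatest_spec (Nat.zero_le n) hP0
  have hi₀n : i₀ + 1 ≤ n := by
    have h1 : (i₀ + 1) * N₀ ≤ q i₀ := hq_ge i₀
    have h2 : q i₀ ≤ n := hi₀P
    nlinarith
  have hi₀max : ¬ P (i₀ + 1) :=
    Nat.findGreatest_is_greatest (by omega) hi₀n
  have hqi₀n : q i₀ ≤ n := hi₀P
  have hqi₀n1 : n < q (i₀ + 1) := by
    have : ¬ (q (i₀ + 1) ≤ n) := hi₀max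
    omega
  -- count bound at n
  have hcount_n : count n ≤ (i₀ + 2) * N₀ := by
    rcases Nat.lt_or_ge n (q i₀ + N₀) with h | h
    · calc count n ≤ count (q i₀ + N₀) := hcount_mono (by omega)
        _ ≤ (i₀ + 2) * N₀ := hcount_q i₀
    · calc count n ≤ count (q i₀ + N₀) := by
            apply hcount_gap (q i₀ + N₀) n _ h
            intro v h1 h2
            apply hnext_min (q i₀ + N₀) v h1
            calc v < n := h2
              _ < q (i₀ + 1) := hqi₀n1
        _ ≤ (i₀ + 2) * N₀ := hcount_q i₀
  -- value bound at n
  have hval_n : g n 0 ≤ C₀ - (i₀ + 1) + ∑ j ∈ Finset.Ico (n - N₀) n, max (g 1 j) 0 := by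
    have htail_nonneg : (0:ℝ) ≤ ∑ j ∈ Finset.Ico (n - N₀) n, max (g 1 j) 0 :=
      Finset.sum_nonneg fun j _ => le_max_right _ _
    rcases Nat.eq_or_lt_of_le hqi₀n with heq | hlt
    · -- n = q i₀
      have hv := hval i₀
      rw [heq] at hv
      linarith
    · -- n > q i₀ : split
      have hlen : 1 ≤ n - q i₀ := by omega
      have hqi1 : 1 ≤ q i₀ := by
        have := hq_ge i₀; nlinarith [hq_ge i₀]
      have h1 : g ((n - q i₀) + q i₀) 0 ≤ g (n - q i₀) (0 + q i₀) + g (q i₀) 0 :=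
        hsub 0 (n - q i₀) (q i₀) hlen hqi1
      have hneq : n = (n - q i₀) + q i₀ := by omega
      rcases Nat.lt_or_ge (n - q i₀) N₀ with hshort | hlong
      · -- short partial block: bound by the tail sum
        have h2 : g (n - q i₀) (0 + q i₀) ≤ ∑ j ∈ Finset.range (n - q i₀), g 1 (q i₀ + j) := by
          have := hchain1 (n - q i₀) (0 + q i₀) hlen
          simpa using this
        have h3 : ∑ j ∈ Finset.range (n - q i₀), g 1 (q i₀ + j)
            ≤ ∑ j ∈ Finset.Ico (n - N₀) n, max (g 1 j) 0 := by
          have himg : ∀ j ∈ Finset.range (n - q i₀), q i₀ + j ∈ Finset.Ico (n - N₀) n := by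
            intro j hj
            simp only [Finset.mem_range] at hj
            simp only [Finset.mem_Ico]
            omega
          calc ∑ j ∈ Finset.range (n - q i₀), g 1 (q i₀ + j)
              ≤ ∑ j ∈ Finset.range (n - q i₀), max (g 1 (q i₀ + j)) 0 :=
                Finset.sum_le_sum fun j _ => le_max_left _ _
            _ = ∑ j ∈ (Finset.range (n - q i₀)).image (fun j => q i₀ + j), max (g 1 j) 0 := by
                rw [Finset.sum_image]
                intro a _ b _ hab
                simp only at hab
                omega
            _ ≤ ∑ j ∈ Finset.Ico (n - N₀) n, max (g 1 j) 0 := by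
                apply Finset.sum_le_sum_of_subset_of_nonneg
                · intro j hj
                  simp only [Finset.mem_image] at hj
                  obtain ⟨a, ha, rfl⟩ := hj
                  exact himg a ha
                · intro j _ _
                  exact le_max_right _ _
        have hv := hval i₀
        rw [← hneq] at h1
        linarith
      · -- long partial block: it is itself ≤ -1
        have h2 : g (n - q i₀) (0 + q i₀) ≤ -1 := by
          rw [Nat.zero_add]
          exact hvis (q i₀) (hqvis i₀) _ hlong
        have hv := hval i₀
        rw [← hneq] at h1
        linarith
  -- combine
  have hNpos : (0:ℝ) < N₀ := by exact_mod_cast hN₀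
  have hdiv : ((count n : ℝ)) / N₀ ≤ i₀ + 2 := by
    rw [div_le_iff₀ hNpos]
    calc (count n : ℝ) ≤ ((i₀ + 2) * N₀ : ℕ) := by exact_mod_cast hcount_n
      _ = ((i₀:ℝ) + 2) * N₀ := by push_cast; ring
  have : (count n : ℝ) / N₀ - 1 ≤ i₀ + 1 := by linarith
  calc g n 0 ≤ C₀ - (i₀ + 1) + ∑ j ∈ Finset.Ico (n - N₀) n, max (g 1 j) 0 := hval_n
    _ ≤ C₀ + 1 - (count n : ℝ) / N₀ + ∑ j ∈ Finset.Ico (n - N₀) n, max (g 1 j) 0 := by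
        linarith





lemma bS_neg (T : X → X) (w : X → ℝ) (k : ℕ) (x : X) :
    bS T (fun y => -(w y)) k x = - bS T w k x := by
  unfold bS; rw [← Finset.sum_neg_distrib]

theorem climenhaga_morris_aux {X : Type*} [MeasurableSpace X] {μ : Measure X}
    [IsProbabilityMeasure μ] (T : X → X) (hT : Ergodic T μ)
    (f : ℕ → X → ℝ) (hint : ∀ n, 1 ≤ n → Integrable (f n) μ)
    (hsub : ∀ n m, 1 ≤ n → 1 ≤ m →
      ∀ᵐ x ∂μ, f (n + m) x ≤ f n (T^[m] x) + f m x)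
    (hdiv : ∀ᵐ x ∂μ, Tendsto (fun n => f n x) atTop atBot) :
    limsup (fun n : ℕ => (((∫ x, f n x ∂μ) / n : ℝ) : EReal)) atTop < 0 := by
  classical
  -- measurable representatives
  set g : ℕ → X → ℝ := fun n =>
    if hn : Integrable (f n) μ then hn.1.mk (f n) else fun _ => 0 with hgdef
  have hg_meas : ∀ n, Measurable (g n) := by
    intro n
    rw [hgdef]
    by_cases hn : Integrable (f n) μ
    · simp only [dif_pos hn]
      exact hn.1.stronglyMeasurable_mk.measurable
    · simp only [dif_neg hn]
      exact measurable_const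
  have hg_eq : ∀ n, 1 ≤ n → f n =ᵐ[μ] g n := by
    intro n hn
    rw [hgdef]
    simp only [dif_pos (hint n hn)]
    exact (hint n hn).1.ae_eq_mk
  have hg_int : ∀ n, 1 ≤ n → Integrable (g n) μ := by
    intro n hn
    exact (hint n hn).congr (hg_eq n hn)
  have hg_integral : ∀ n, 1 ≤ n → ∫ x, f n x ∂μ = ∫ x, g n x ∂μ := by
    intro n hn
    exact integral_congr_ae (hg_eq n hn)
  -- a.e. subadditivity for g, at all shifted points
  have hgsub : ∀ n m : ℕ, 1 ≤ n → 1 ≤ m →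
      ∀ᵐ y ∂μ, g (n + m) y ≤ g n (T^[m] y) + g m y := by
    intro n m hn hm
    have e1 : f (n + m) =ᵐ[μ] g (n + m) := hg_eq (n + m) (by omega)
    have e3 : f m =ᵐ[μ] g m := hg_eq m hm
    have e2 : (fun y => f n (T^[m] y)) =ᵐ[μ] (fun y => g n (T^[m] y)) := by
      have := Measure.QuasiMeasurePreserving.ae_eq_comp
        ((hT.toMeasurePreserving.iterate m).quasiMeasurePreserving) (hg_eq n hn)
      exact this
    filter_upwards [hsub n m hn hm, e1, e2, e3] with y h1 h2 h3 h4
    rw [← h2, ← h4, ← h3]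
    exact h1
  -- shifted a.e. subadditivity (countably many conditions)
  have hOmega_sub : ∀ᵐ x ∂μ, ∀ p n m : ℕ, 1 ≤ n → 1 ≤ m →
      g (n + m) (T^[p] x) ≤ g n (T^[p + m] x) + g m (T^[p] x) := by
    rw [ae_all_iff]
    intro p
    rw [ae_all_iff]
    intro n
    rw [ae_all_iff]
    intro m
    by_cases hn : 1 ≤ n
    · by_cases hm : 1 ≤ m
      · -- pull back the bad set
        have hbad : μ {y | ¬ (g (n + m) y ≤ g n (T^[m] y) + g m y)} = 0 := by
          rw [← ae_iff]
          exact hgsub n m hn hm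
        have hpre : μ (T^[p] ⁻¹' {y | ¬ (g (n + m) y ≤ g n (T^[m] y) + g m y)}) = 0 :=
          (hT.toMeasurePreserving.iterate p).quasiMeasurePreserving.preimage_null hbad
        rw [ae_iff]
        refine measure_mono_null ?_ hpre
        intro x hx
        simp only [mem_setOf_eq, mem_preimage] at hx ⊢
        intro hcon
        apply hx
        intro _ _
        have hit : T^[m] (T^[p] x) = T^[p + m] x := by
          rw [← Function.iterate_add_apply]
          congr 1
          omega
        rw [hit] at hcon
        exact hcon
      · filter_upwards with x
        intro _ hm'
        omega
    · filter_upwards with x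
      intro hn'
      exact absurd hn' hn
  -- divergence for g
  have hg_div : ∀ᵐ x ∂μ, Tendsto (fun n => g n x) atTop atBot := by
    have hall : ∀ᵐ x ∂μ, ∀ n : ℕ, 1 ≤ n → f n x = g n x := by
      rw [ae_all_iff]
      intro n
      by_cases hn : 1 ≤ n
      · filter_upwards [hg_eq n hn] with x hx _; exact hx
      · filter_upwards with x hn'; exact absurd hn' hn
    filter_upwards [hall, hdiv] with x hx hdx
    apply hdx.congr'
    rw [eventuallyEq_iff_exists_mem]
    exact ⟨{n | 1 ≤ n}, eventually_atTop.mpr ⟨1, fun n hn => hn⟩, fun n hn => hx n hn⟩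
  -- the sets B N where everything from N on is ≤ -1
  set B : ℕ → Set X := fun N => {x | ∀ m, N ≤ m → g m x ≤ -1} with hBdef
  have hBmeas : ∀ N, MeasurableSet (B N) := by
    intro N
    have : B N = ⋂ m : ℕ, ⋂ (_ : N ≤ m), {x | g m x ≤ -1} := by
      ext x; simp [hBdef]
    rw [this]
    exact MeasurableSet.iInter fun m => MeasurableSet.iInter fun _ =>
      measurableSet_le (hg_meas m) measurable_const
  have hBmono : Monotone B := by
    intro a b hab x hx m hm
    exact hx m (le_trans hab hm)
  have hBunion : μ (⋃ N, B N) = 1 := by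
    have hae : ∀ᵐ x ∂μ, x ∈ ⋃ N, B N := by
      filter_upwards [hg_div] with x hx
      have : ∀ᶠ n in atTop, g n x ≤ -1 := hx.eventually (eventually_le_atBot (-1))
      rw [eventually_atTop] at this
      obtain ⟨N, hN⟩ := this
      exact mem_iUnion.mpr ⟨N, fun m hm => hN m hm⟩
    have hcompl : μ (⋃ N, B N)ᶜ = 0 := by
      have : (⋃ N, B N)ᶜ = {x | ¬ x ∈ ⋃ N, B N} := rfl
      rw [this, ← ae_iff]
      filter_upwards [hae] with x hx
      exact hx
    have := prob_compl_eq_zero_iff (μ := μ)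
      (MeasurableSet.iUnion hBmeas)
    rw [this] at hcompl
    exact hcompl
  -- choose N₀ with μ (B N₀) ≥ 1/2 and N₀ ≥ 1
  have htendB : Tendsto (fun N => μ (B N)) atTop (𝓝 1) := by
    have := tendsto_measure_iUnion_atTop (μ := μ) hBmono
    rwa [hBunion] at this
  have hhalf : ∀ᶠ N in atTop, (1/2 : ℝ≥0∞) < μ (B N) := by
    apply htendB.eventually
    apply lt_mem_nhds
    norm_num
  obtain ⟨N₀', hN₀'⟩ := eventually_atTop.mp hhalf
  set N₀ : ℕ := N₀' + 1 with hN₀def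
  have hN₀ : 1 ≤ N₀ := by omega
  set A : Set X := B N₀ with hAdef
  have hAmeas : MeasurableSet A := hBmeas N₀
  have hAhalf : (1/2 : ℝ≥0∞) ≤ μ A := le_of_lt (hN₀' N₀ (by omega))
  have hAprop : ∀ y ∈ A, ∀ m, N₀ ≤ m → g m y ≤ -1 := fun y hy => hy
  -- indicator function of A and its Birkhoff sums
  set ind : X → ℝ := fun y => A.indicator (fun _ => (1:ℝ)) y with hinddef
  have hind_meas : Measurable ind := measurable_const.indicator hAmeas
  have hind_int : Integrable ind μ := by
    apply Integrable.indicator (integrable_const (1:ℝ)) hAmeas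
  have hind_integral : ∫ x, ind x ∂μ = (μ A).toReal := by
    rw [hinddef]
    rw [integral_indicator_const (1:ℝ) hAmeas]
    simp
    rfl
  have htoReal_half : (1/2 : ℝ) ≤ (μ A).toReal := by
    have h1 : ((1/2 : ℝ≥0∞)).toReal ≤ (μ A).toReal :=
      ENNReal.toReal_mono (measure_ne_top μ A) hAhalf
    have h2 : ((1/2 : ℝ≥0∞)).toReal = (1/2 : ℝ) := by norm_num
    linarith [h1, h2.symm.le]
  -- cheap Birkhoff #1 : visit frequency of A is at least 3/8
  have h1ae : ∀ᵐ x ∂μ, ∀ᶠ n in atTop, bS T (fun y => -(ind y)) n x ≤ (-(3/8)) * n := by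
    apply cheap_upper hT hind_meas.neg hind_int.neg
    simp only [Pi.neg_apply]
    rw [integral_neg, hind_integral]
    linarith
  -- cheap Birkhoff #2, #3 : sliding control on positive parts of g 1
  set wp : X → ℝ := fun y => max (g 1 y) 0 with hwdef
  have hw_meas : Measurable wp := (hg_meas 1).max measurable_const
  have hw_int : Integrable wp μ := (hg_int 1 le_rfl).pos_part
  have hw_nonneg : ∀ y, 0 ≤ wp y := fun y => le_max_right _ _
  set Ip : ℝ := ∫ x, wp x ∂μ with hIp
  set ν : ℝ := (N₀ : ℝ) with hν
  have hνpos : (0:ℝ) < ν := by rw [hν]; exact_mod_cast hN₀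
  set δ : ℝ := 1/(32*ν) with hδ
  have hδpos : 0 < δ := by rw [hδ]; positivity
  have h2ae : ∀ᵐ x ∂μ, ∀ᶠ n in atTop, bS T wp n x ≤ (Ip + δ) * n := by
    apply cheap_upper hT hw_meas hw_int
    linarith
  have h3ae : ∀ᵐ x ∂μ, ∀ᶠ n in atTop, bS T (fun y => -(wp y)) n x ≤ (-Ip + δ) * n := by
    apply cheap_upper hT hw_meas.neg hw_int.neg
    simp only [Pi.neg_apply]
    rw [integral_neg]
    linarith
  set κ : ℝ := 1/(4*ν) with hκ
  have hκpos : 0 < κ := by rw [hκ]; positivity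
  -- the main pointwise estimate
  have hmain : ∀ᵐ x ∂μ, ∀ᶠ n in atTop, g n x ≤ (-κ) * n := by
    filter_upwards [hOmega_sub, h1ae, h2ae, h3ae] with x hxsub hx1 hx2 hx3
    set vis : ℕ → Prop := fun p => T^[p] x ∈ A with hvisdef
    have hVcount : ∀ n : ℕ, bS T ind n x = (((Finset.range n).filter vis).card : ℝ) := by
      intro n
      unfold bS
      rw [← Finset.sum_boole]
      apply Finset.sum_congr rfl
      intro j _
      rw [hinddef]
      by_cases hj : T^[j] x ∈ A
      · simp [Set.indicator_of_mem hj, if_pos (show vis j from hj), hj]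
      · simp [Set.indicator_of_notMem hj, if_neg (show ¬ vis j from hj), hj]
    have hx1' : ∀ᶠ n : ℕ in atTop, (3/8) * (n:ℝ) ≤ (((Finset.range n).filter vis).card : ℝ) := by
      filter_upwards [hx1] with n hn
      rw [bS_neg] at hn
      rw [← hVcount]
      linarith
    -- infinitely many visits
    have hinf : ∀ m, ∃ p, m ≤ p ∧ vis p := by
      intro m
      by_contra hcon
      push_neg at hcon
      obtain ⟨Nt, hNt⟩ := eventually_atTop.mp hx1'
      set n : ℕ := Nt + 3*m + 3 with hn
      have hcount_le : (((Finset.range n).filter vis).card : ℝ) ≤ m := by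
        have hsubset : (Finset.range n).filter vis ⊆ Finset.range m := by
          intro j hj
          simp only [Finset.mem_filter, Finset.mem_range] at hj ⊢
          by_contra hjm
          exact hcon j (by omega) hj.2
        have := Finset.card_le_card hsubset
        rw [Finset.card_range] at this
        exact_mod_cast this
      have hge := hNt n (by omega)
      have hcast : (3:ℝ)*m + 3 ≤ (n:ℝ) := by
        rw [hn]; push_cast; linarith
      nlinarith
    -- chain bound
    have hvisprop : ∀ p, vis p → ∀ m, N₀ ≤ m → g m (T^[p] x) ≤ -1 :=
      fun p hp m hm => hAprop _ hp m hm
    have hsubprop : ∀ p n m, 1 ≤ n → 1 ≤ m →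
        g (n + m) (T^[p] x) ≤ g n (T^[p + m] x) + g m (T^[p] x) :=
      fun p n m hn hm => hxsub p n m hn hm
    obtain ⟨C, n₀, hCB⟩ := chain_bound (fun m p => g m (T^[p] x)) N₀ hN₀ vis
      hvisprop hsubprop hinf
    -- tail sums identity
    have htail : ∀ n : ℕ, N₀ ≤ n →
        ∑ j ∈ Finset.Ico (n - N₀) n, max (g 1 (T^[j] x)) 0
          = bS T wp n x - bS T wp (n - N₀) x := by
      intro n hn
      have := Finset.sum_Ico_eq_sub (fun j => wp (T^[j] x)) (show n - N₀ ≤ n by omega)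
      exact this
    -- combine everything
    obtain ⟨N1, hN1⟩ := eventually_atTop.mp hx1'
    obtain ⟨N2, hN2⟩ := eventually_atTop.mp hx2
    obtain ⟨N3, hN3⟩ := eventually_atTop.mp hx3
    obtain ⟨K, hK⟩ := exists_nat_gt ((C + (Ip - δ)*ν + 1) * (16*ν))
    rw [eventually_atTop]
    refine ⟨N1 + N2 + N3 + N₀ + n₀ + K + 1, fun n hn => ?_⟩
    have hnN₀ : N₀ ≤ n := by omega
    have hchain := hCB n (by omega)
    rw [htail n hnN₀] at hchain
    have hcount_ge : (3/8) * (n:ℝ) ≤ (((Finset.range n).filter vis).card : ℝ) :=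
      hN1 n (by omega)
    have hup : bS T wp n x ≤ (Ip + δ) * n := hN2 n (by omega)
    have hlow : (Ip - δ) * ((n:ℝ) - N₀) ≤ bS T wp (n - N₀) x := by
      have h1 := hN3 (n - N₀) (by omega)
      rw [bS_neg] at h1
      have hcast : ((n - N₀ : ℕ) : ℝ) = (n:ℝ) - (N₀:ℝ) := by
        rw [Nat.cast_sub hnN₀]
      rw [hcast] at h1
      linarith
    -- division step
    have hdivstep : ((3/8) * (n:ℝ)) / ν ≤ (((Finset.range n).filter vis).card : ℝ) / ν :=
      (div_le_div_iff_of_pos_right hνpos).mpr hcount_ge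
    -- constant absorption
    have hKn : (C + (Ip - δ)*ν + 1) * (16*ν) ≤ (n:ℝ) := by
      have : (K:ℝ) ≤ n := by exact_mod_cast (by omega : K ≤ n)
      linarith [hK]
    -- final arithmetic
    have hδν : δ = 1/(32*ν) := hδ
    have hκν : κ = 1/(4*ν) := hκ
    have main : g n x ≤ C + (Ip - δ)*ν + (2*δ - (3/8)/ν) * n := by
      have e1 : (Ip + δ) * n - (Ip - δ) * ((n:ℝ) - N₀) = 2*δ*n + (Ip - δ)*ν := by
        rw [hν]; ring
      have e2 : ((3/8) * (n:ℝ)) / ν = ((3/8)/ν) * n := by ring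
      have := hchain
      -- g n x ≤ C - count/ν + (bS n - bS (n-N₀))
      have hb : bS T wp n x - bS T wp (n - N₀) x ≤ 2*δ*n + (Ip - δ)*ν := by
        have := sub_le_sub hup hlow
        linarith [e1.symm.le, e1.le]
      have hc : -( (((Finset.range n).filter vis).card : ℝ) / ν) ≤ -(((3/8)/ν) * n) := by
        rw [← e2]
        linarith
      calc g n x ≤ C - (((Finset.range n).filter vis).card : ℝ) / ν
            + (bS T wp n x - bS T wp (n - N₀) x) := by
            rw [hν]
            exact hchain
        _ ≤ C - ((3/8)/ν) * n + (2*δ*n + (Ip - δ)*ν) := by linarith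
        _ = C + (Ip - δ)*ν + (2*δ - (3/8)/ν) * n := by ring
    have hcoef : 2*δ - (3/8)/ν = -(5/(16*ν)) := by
      rw [hδν]
      field_simp
      ring
    have habs : C + (Ip - δ)*ν ≤ (1/(16*ν)) * n := by
      rw [div_mul_eq_mul_div, le_div_iff₀ (by positivity : (0:ℝ) < 16*ν)] at *
      nlinarith [hKn]
    have hfinal : g n x ≤ (-(4/(16*ν))) * n := by
      rw [hcoef] at main
      have : (1/(16*ν)) * n + (-(5/(16*ν))) * n = (-(4/(16*ν))) * n := by ring
      nlinarith [main, habs]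
    have : (-(4/(16*ν))) * (n:ℝ) = (-κ) * n := by
      rw [hκν]
      ring_nf
    linarith [hfinal, this.le, this.ge]
  -- integral transfer
  set Gs : ℕ → Set X := fun N => {x | ∀ n, N ≤ n → g n x ≤ (-κ) * n} with hGsdef
  have hGmeas : ∀ N, MeasurableSet (Gs N) := by
    intro N
    have : Gs N = ⋂ n : ℕ, ⋂ (_ : N ≤ n), {x | g n x ≤ (-κ) * n} := by
      ext x; simp [hGsdef]
    rw [this]
    exact MeasurableSet.iInter fun n => MeasurableSet.iInter fun _ =>
      measurableSet_le (hg_meas n) measurable_const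
  have hGmono : Monotone Gs := fun a b hab x hx n hn => hx n (le_trans hab hn)
  have hGae : ∀ᵐ x ∂μ, x ∈ ⋃ N, Gs N := by
    filter_upwards [hmain] with x hx
    rw [eventually_atTop] at hx
    obtain ⟨N, hN⟩ := hx
    exact mem_iUnion.mpr ⟨N, fun n hn => hN n hn⟩
  have hGcompl0 : μ (⋂ N, (Gs N)ᶜ) = 0 := by
    have h1 : (⋂ N, (Gs N)ᶜ) = (⋃ N, Gs N)ᶜ := by
      rw [Set.compl_iUnion]
    rw [h1]
    have : (⋃ N, Gs N)ᶜ = {x | ¬ x ∈ ⋃ N, Gs N} := rfl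
    rw [this, ← ae_iff]
    exact hGae
  have htend0 : Tendsto (fun N => μ ((Gs N)ᶜ)) atTop (𝓝 0) := by
    have := tendsto_measure_iInter_atTop (μ := μ) (s := fun N => (Gs N)ᶜ)
      (fun N => (hGmeas N).compl.nullMeasurableSet)
      (fun a b hab => compl_subset_compl.mpr (hGmono hab))
      ⟨0, measure_ne_top μ _⟩
    rwa [hGcompl0] at this
  -- dominated convergence for the truncated positive parts
  set u : ℕ → X → ℝ := fun L y => max (wp y - L) 0 with hudef
  have hu_meas : ∀ L, Measurable (u L) := fun L =>
    (hw_meas.sub measurable_const).max measurable_const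
  have hu_int : ∀ L, Integrable (u L) μ := fun L =>
    (hw_int.sub (integrable_const _)).pos_part
  have hu_nonneg : ∀ L y, 0 ≤ u L y := fun L y => le_max_right _ _
  have hu_le : ∀ L y, u L y ≤ wp y := by
    intro L y
    rw [hudef]
    simp only
    rcases le_or_gt (wp y) (L:ℝ) with hc | hc
    · rw [max_eq_right (by linarith)]
      exact hw_nonneg y
    · rw [max_eq_left (by linarith)]
      have : (0:ℝ) ≤ L := Nat.cast_nonneg L
      linarith
  set θ : ℕ → ℝ := fun L => ∫ y, u L y ∂μ with hθdef
  have hθtend : Tendsto θ atTop (𝓝 0) := by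
    have h0 : (0:ℝ) = ∫ (_ : X), (0:ℝ) ∂μ := by simp
    rw [h0]
    apply tendsto_integral_of_dominated_convergence wp
      (fun L => (hu_meas L).aestronglyMeasurable) hw_int
    · intro L
      filter_upwards with y
      rw [Real.norm_eq_abs, abs_of_nonneg (hu_nonneg L y)]
      exact hu_le L y
    · filter_upwards with y
      have : ∀ᶠ L : ℕ in atTop, u L y = 0 := by
        rw [eventually_atTop]
        obtain ⟨L, hL⟩ := exists_nat_ge (wp y)
        refine ⟨L, fun M hM => ?_⟩
        rw [hudef]
        simp only
        rw [max_eq_right]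
        have : (L:ℝ) ≤ M := by exact_mod_cast hM
        linarith
      exact Tendsto.congr' (by filter_upwards [this] with L hL; exact hL.symm)
        tendsto_const_nhds
  -- choose the truncation level and the threshold set
  obtain ⟨L, hLθ⟩ : ∃ L : ℕ, θ L < κ/8 := by
    have := hθtend.eventually (gt_mem_nhds (show (0:ℝ) < κ/8 by positivity))
    rw [eventually_atTop] at this
    obtain ⟨L, hL⟩ := this
    exact ⟨L, hL L le_rfl⟩
  set δ₂ : ℝ := min (κ/(8*((L:ℝ)+1))) (1/2) with hδ₂def
  have hδ₂pos : 0 < δ₂ := by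
    rw [hδ₂def]
    apply lt_min
    · positivity
    · norm_num
  have hδ₂half : δ₂ ≤ 1/2 := min_le_right _ _
  have hδ₂L : (L:ℝ) * δ₂ ≤ κ/8 := by
    have h1 : δ₂ ≤ κ/(8*((L:ℝ)+1)) := min_le_left _ _
    have h2 : (0:ℝ) ≤ L := Nat.cast_nonneg L
    have h3 : (0:ℝ) < 8*((L:ℝ)+1) := by positivity
    rw [le_div_iff₀ h3] at h1
    nlinarith
  obtain ⟨N₁, hN₁⟩ : ∃ N₁ : ℕ, μ ((Gs N₁)ᶜ) < ENNReal.ofReal δ₂ := by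
    have := htend0.eventually (gt_mem_nhds (show (0:ℝ≥0∞) < ENNReal.ofReal δ₂ by
      simp [ENNReal.ofReal_pos, hδ₂pos]))
    rw [eventually_atTop] at this
    obtain ⟨N₁, hN₁⟩ := this
    exact ⟨N₁, hN₁ N₁ le_rfl⟩
  set G : Set X := Gs N₁ with hGdef
  have hGc_real : (μ Gᶜ).toReal ≤ δ₂ :=
    ENNReal.toReal_le_of_le_ofReal hδ₂pos.le (le_of_lt hN₁)
  have hG_real : 1 - δ₂ ≤ (μ G).toReal := by
    have hsum : μ G + μ Gᶜ = 1 := by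
      rw [measure_add_measure_compl (hGmeas N₁)]
      simp
    have := congrArg ENNReal.toReal hsum
    rw [ENNReal.toReal_add (measure_ne_top μ _) (measure_ne_top μ _)] at this
    simp at this
    linarith
  -- a.e. domination of g N by sums of wp along the orbit
  have hdom : ∀ᵐ y ∂μ, ∀ k, 1 ≤ k → g k y ≤ ∑ j ∈ Finset.range k, wp (T^[j] y) := by
    filter_upwards [hOmega_sub] with y hy
    have H : ∀ k, 1 ≤ k → ∀ p, g k (T^[p] y) ≤ ∑ j ∈ Finset.range k, g 1 (T^[p+j] y) := by
      intro k
      induction k with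
      | zero => intro hk; omega
      | succ k ih =>
          intro _ p
          rcases Nat.eq_zero_or_pos k with h1 | h1
          · subst h1; simp
          · have hk : 1 ≤ k := h1
            have hstep := hy p 1 k le_rfl hk
            have hrec := ih hk p
            calc g (k + 1) (T^[p] y) = g (1 + k) (T^[p] y) := by rw [Nat.add_comm]
              _ ≤ g 1 (T^[p + k] y) + g k (T^[p] y) := hstep
              _ ≤ g 1 (T^[p + k] y) + ∑ j ∈ Finset.range k, g 1 (T^[p+j] y) := by linarith
              _ = ∑ j ∈ Finset.range (k+1), g 1 (T^[p+j] y) := by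
                  rw [Finset.sum_range_succ]; ring
    intro k hk
    have := H k hk 0
    simp only [Function.iterate_zero_apply, Nat.zero_add] at this
    calc g k y ≤ ∑ j ∈ Finset.range k, g 1 (T^[j] y) := by
          have h2 := H k hk 0
          simpa using h2
      _ ≤ ∑ j ∈ Finset.range k, wp (T^[j] y) := by
          apply Finset.sum_le_sum
          intro j _
          exact le_max_left _ _
  -- integrability of compositions
  have hwp_iter_int : ∀ j : ℕ, Integrable (fun y => wp (T^[j] y)) μ := fun j =>
    integrable_comp_of_measurePreserving (hT.toMeasurePreserving.iterate j)
      hw_meas.aestronglyMeasurable hw_int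
  have hu_iter_int : ∀ j : ℕ, Integrable (fun y => u L (T^[j] y)) μ := fun j =>
    integrable_comp_of_measurePreserving (hT.toMeasurePreserving.iterate j)
      (hu_meas L).aestronglyMeasurable (hu_int L)
  have hu_iter_integral : ∀ j : ℕ, ∫ y, u L (T^[j] y) ∂μ = θ L := fun j =>
    integral_comp_of_measurePreserving (hT.toMeasurePreserving.iterate j)
      (hu_meas L).aestronglyMeasurable
  -- the integral bound for large N
  have hintN : ∀ N : ℕ, max N₁ 1 ≤ N → ∫ x, g N x ∂μ ≤ (-(κ/4)) * N := by
    intro N hN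
    have hN1 : 1 ≤ N := le_trans (le_max_right _ _) hN
    have hNN₁ : N₁ ≤ N := le_trans (le_max_left _ _) hN
    have hsplit : (∫ x in G, g N x ∂μ) + ∫ x in Gᶜ, g N x ∂μ = ∫ x, g N x ∂μ :=
      integral_add_compl (hGmeas N₁) (hg_int N hN1)
    -- on G
    have hbound1 : ∫ x in G, g N x ∂μ ≤ (-(κ * N)) * (1 - δ₂) := by
      have hmo : ∫ x in G, g N x ∂μ ≤ ∫ _ in G, (-κ) * (N:ℝ) ∂μ := by
        apply setIntegral_mono_on (hg_int N hN1).integrableOn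
          (integrableOn_const (measure_lt_top μ G).ne) (hGmeas N₁)
        intro x hx
        exact hx N hNN₁
      rw [setIntegral_const, measureReal_def] at hmo
      have hle : (μ G).toReal • ((-κ) * (N:ℝ)) ≤ (-(κ * N)) * (1 - δ₂) := by
        rw [smul_eq_mul]
        have hnn : (-κ) * (N:ℝ) ≤ 0 := by
          have : (0:ℝ) ≤ N := Nat.cast_nonneg N
          nlinarith
        have h2 : (1 - δ₂) ≤ (μ G).toReal := hG_real
        nlinarith
      linarith
    -- on Gᶜ
    have hbound2 : ∫ x in Gᶜ, g N x ∂μ ≤ N * (κ/8 + κ/8) := by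
      have hstep1 : ∫ x in Gᶜ, g N x ∂μ ≤ ∫ x in Gᶜ, (∑ j ∈ Finset.range N, wp (T^[j] x)) ∂μ := by
        apply integral_mono_ae (hg_int N hN1).integrableOn
          (Integrable.integrableOn (integrable_finset_sum _ (fun j _ => hwp_iter_int j)))
        exact ae_restrict_of_ae (by
          filter_upwards [hdom] with y hy
          exact hy N hN1)
      have hstep2 : ∫ x in Gᶜ, (∑ j ∈ Finset.range N, wp (T^[j] x)) ∂μ
          = ∑ j ∈ Finset.range N, ∫ x in Gᶜ, wp (T^[j] x) ∂μ := by
        apply integral_finset_sum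
        intro j _
        exact (hwp_iter_int j).integrableOn
      have hstep3 : ∀ j : ℕ, ∫ x in Gᶜ, wp (T^[j] x) ∂μ ≤ θ L + (L:ℝ) * δ₂ := by
        intro j
        have hptwise : ∀ y : X, wp (T^[j] y) ≤ u L (T^[j] y) + L := by
          intro y
          rw [hudef]
          simp only
          rcases le_or_gt (wp (T^[j] y)) (L:ℝ) with hc | hc
          · rw [max_eq_right (by linarith)]
            linarith
          · rw [max_eq_left (by linarith)]
            linarith
        calc ∫ x in Gᶜ, wp (T^[j] x) ∂μ
            ≤ ∫ x in Gᶜ, (u L (T^[j] x) + L) ∂μ := by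
              apply integral_mono_ae (hwp_iter_int j).integrableOn
                ((hu_iter_int j).integrableOn.add
                  (integrableOn_const (measure_lt_top μ Gᶜ).ne))
              exact ae_restrict_of_ae (Filter.Eventually.of_forall hptwise)
          _ = (∫ x in Gᶜ, u L (T^[j] x) ∂μ) + (μ Gᶜ).toReal • (L:ℝ) := by
              rw [integral_add (hu_iter_int j).integrableOn
                (integrableOn_const (measure_lt_top μ Gᶜ).ne)]
              rw [setIntegral_const, measureReal_def]
          _ ≤ θ L + (L:ℝ) * δ₂ := by
              have h1 : ∫ x in Gᶜ, u L (T^[j] x) ∂μ ≤ ∫ x, u L (T^[j] x) ∂μ := by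
                apply setIntegral_le_integral (hu_iter_int j)
                filter_upwards with y
                exact hu_nonneg L (T^[j] y)
              rw [hu_iter_integral j] at h1
              have h2 : (μ Gᶜ).toReal • (L:ℝ) ≤ (L:ℝ) * δ₂ := by
                rw [smul_eq_mul]
                have : (0:ℝ) ≤ L := Nat.cast_nonneg L
                nlinarith [hGc_real]
              linarith
      calc ∫ x in Gᶜ, g N x ∂μ
          ≤ ∑ j ∈ Finset.range N, ∫ x in Gᶜ, wp (T^[j] x) ∂μ := by
            rw [← hstep2]; exact hstep1
        _ ≤ ∑ _ ∈ Finset.range N, (θ L + (L:ℝ) * δ₂) :=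
            Finset.sum_le_sum fun j _ => hstep3 j
        _ = N * (θ L + (L:ℝ) * δ₂) := by
            rw [Finset.sum_const, Finset.card_range]
            simp only [nsmul_eq_mul]
        _ ≤ N * (κ/8 + κ/8) := by
            have : (0:ℝ) ≤ N := Nat.cast_nonneg N
            nlinarith [hLθ, hδ₂L]
    -- combine
    have hNpos : (0:ℝ) ≤ N := Nat.cast_nonneg N
    have : ∫ x, g N x ∂μ ≤ (-(κ * N)) * (1 - δ₂) + N * (κ/8 + κ/8) := by
      rw [← hsplit]; linarith
    calc ∫ x, g N x ∂μ ≤ (-(κ * N)) * (1 - δ₂) + N * (κ/8 + κ/8) := this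
      _ ≤ (-(κ/4)) * N := by
          nlinarith [mul_nonneg (mul_nonneg hκpos.le hNpos) (by linarith : (0:ℝ) ≤ 1/2 - δ₂)]
  -- conclusion in EReal
  have hev : ∀ᶠ n : ℕ in atTop,
      (((∫ x, f n x ∂μ) / n : ℝ) : EReal) ≤ ((-(κ/4) : ℝ) : EReal) := by
    rw [eventually_atTop]
    refine ⟨max N₁ 1, fun n hn => ?_⟩
    have hn1 : 1 ≤ n := le_trans (le_max_right _ _) hn
    have hnpos : (0:ℝ) < n := by exact_mod_cast hn1
    rw [EReal.coe_le_coe_iff]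
    rw [hg_integral n hn1]
    rw [div_le_iff₀ hnpos]
    calc ∫ x, g n x ∂μ ≤ (-(κ/4)) * n := hintN n hn
      _ = (-(κ/4)) * n := rfl
  have hls : limsup (fun n : ℕ => (((∫ x, f n x ∂μ) / n : ℝ) : EReal)) atTop
      ≤ ((-(κ/4) : ℝ) : EReal) := limsup_le_of_le (by isBoundedDefault) hev
  apply lt_of_le_of_lt hls
  have : (-(κ/4) : ℝ) < 0 := by linarith
  exact_mod_cast this


end ClimenhagaMorris

open MeasureTheory Filter

/-- **Climenhaga–Morris lemma.** If `(f n)` is a subadditive sequence of integrable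
functions over an ergodic measure-preserving system and `f n x → -∞` a.e., then
`lim (1/n) ∫ f n dμ < 0` (the limit exists in `ℝ ∪ {-∞}`; we express it as a limsup
in `EReal`). -/
theorem climenhaga_morris {X : Type*} [MeasurableSpace X] {μ : Measure X}
    [IsProbabilityMeasure μ] (T : X → X) (hT : Ergodic T μ)
    (f : ℕ → X → ℝ) (hint : ∀ n, 1 ≤ n → Integrable (f n) μ)
    (hsub : ∀ n m, 1 ≤ n → 1 ≤ m →
      ∀ᵐ x ∂μ, f (n + m) x ≤ f n (T^[m] x) + f m x)
    (hdiv : ∀ᵐ x ∂μ, Tendsto (fun n => f n x) atTop atBot) :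
    limsup (fun n : ℕ => (((∫ x, f n x ∂μ) / n : ℝ) : EReal)) atTop < 0 :=
  ClimenhagaMorris.climenhaga_morris_aux T hT f hint hsub hdiv
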